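/- Let R be a commutative Noetherian ring of dimension d and I ⊆ R an ideal. Then there exists an ideal J of R with √I = √J such that J/J² is generated by at most d elements as an R/J-module. -/

import Mathlib

/-- Auxiliary: a sequence of `i` elements of `I` such that every minimal prime of the ideal
they span which does not contain `I` admits a strict chain of primes of length `i` below it. -/
private lemma aux_seq_stmt16 {R : Type*} [CommRing R] [IsNoetherianRing R] (I : Ideal R) :
    ∀ i : ℕ, ∃ a : Fin i → R, (∀ j, a j ∈ I) ∧
      ∀ q ∈ (Ideal.span (Set.range a)).minimalPrimes, ¬ I ≤ q →
        ∃ c : LTSeries (PrimeSpectrum R), c.length = i ∧ c.last.asIdeal = q := by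
  intro i
  induction i with
  | zero =>
    refine ⟨fun _ => 0, fun j => I.zero_mem, fun q hq hIq => ?_⟩
    exact ⟨RelSeries.singleton _ ⟨q, hq.1.1⟩, rfl, by simp [RelSeries.last_singleton]⟩
  | succ i ih =>
    obtain ⟨a, haI, hchain⟩ := ih
    classical
    set A := Ideal.span (Set.range a) with hA
    have hfin : A.minimalPrimes.Finite := by
      rw [Ideal.minimalPrimes_eq_comap]
      exact ((minimalPrimes.finite_of_isNoetherianRing _).image _)
    set T : Set (Ideal R) := {p | p ∈ A.minimalPrimes ∧ ¬ I ≤ p} with hT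
    have hTfin : T.Finite := hfin.subset (fun p hp => hp.1)
    have hx : ∃ x ∈ I, ∀ p ∈ T, x ∉ p := by
      by_contra hcon
      push_neg at hcon
      have hsub : (I : Set R) ⊆ ⋃ p ∈ (hTfin.toFinset : Set (Ideal R)), (p : Set R) := by
        intro x hxI
        obtain ⟨p, hp, hxp⟩ := hcon x hxI
        exact Set.mem_biUnion (by simpa using hp) hxp
      rw [Ideal.subset_union_prime ⊥ ⊥
        (fun p hp _ _ => ((hTfin.mem_toFinset.mp hp).1).1.1)] at hsub
      obtain ⟨p, hp, hIp⟩ := hsub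
      exact (hTfin.mem_toFinset.mp hp).2 hIp
    obtain ⟨x, hxI, hxT⟩ := hx
    refine ⟨Matrix.vecCons x a, fun j => ?_, fun q hq hIq => ?_⟩
    · refine Fin.cases hxI (fun j => haI j) j
    · haveI hqp : q.IsPrime := hq.1.1
      have hAq : A ≤ q := by
        refine le_trans (Ideal.span_mono ?_) hq.1.2
        rw [Matrix.range_cons]
        exact Set.subset_union_right
      obtain ⟨p, hpmin, hpq⟩ := Ideal.exists_minimalPrimes_le hAq
      have hIp : ¬ I ≤ p := fun h => hIq (h.trans hpq)
      have hxq : x ∈ q := hq.1.2 (Ideal.subset_span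
        (by rw [Matrix.range_cons]; exact Set.mem_union_left _ rfl))
      have hxp : x ∉ p := hxT p ⟨hpmin, hIp⟩
      have hlt : p < q := lt_of_le_of_ne hpq (fun h => hxp (h ▸ hxq))
      obtain ⟨c, hclen, hclast⟩ := hchain p hpmin hIp
      have hltP : c.last < (⟨q, hqp⟩ : PrimeSpectrum R) :=
        (PrimeSpectrum.asIdeal_lt_asIdeal _ _).mp (by rw [hclast]; exact hlt)
      refine ⟨c.snoc ⟨q, hqp⟩ hltP, ?_, ?_⟩
      · simp [RelSeries.snoc, RelSeries.append, hclen]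
      · simp [RelSeries.last_snoc]

/-- Boratyński–Katz: for any ideal `I` in a Noetherian ring of dimension `d` there is
an ideal `J` with `√I = √J` and `J/J²` generated by at most `d` elements. -/
theorem stmt_16 {R : Type*} [CommRing R] [IsNoetherianRing R]
    (d : ℕ) (hd : ringKrullDim R = (d : WithBot ℕ∞)) (I : Ideal R) :
    ∃ J : Ideal R, I.radical = J.radical ∧
      ∃ f : Fin d → R, (∀ i, f i ∈ J) ∧ J = Ideal.span (Set.range f) ⊔ J ^ 2 := by
  classical
  obtain ⟨a, haI, hchain⟩ := aux_seq_stmt16 I d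
  set A := Ideal.span (Set.range a) with hA
  have hAI : A ≤ I := Ideal.span_le.mpr (Set.range_subset_iff.mpr haI)
  have hfin : A.minimalPrimes.Finite := by
    rw [Ideal.minimalPrimes_eq_comap]
    exact ((minimalPrimes.finite_of_isNoetherianRing _).image _)
  -- Every minimal prime of `A` not containing `I` is maximal.
  have hmax : ∀ q ∈ A.minimalPrimes, ¬ I ≤ q → q.IsMaximal := by
    intro q hq hIq
    haveI hqp : q.IsPrime := hq.1.1
    by_contra hnm
    obtain ⟨m, hm, hqm⟩ := Ideal.exists_le_maximal q hqp.ne_top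
    have hne : q ≠ m := fun h => hnm (h ▸ hm)
    obtain ⟨c, hclen, hclast⟩ := hchain q hq hIq
    have hltP : c.last < (⟨m, hm.isPrime⟩ : PrimeSpectrum R) :=
      (PrimeSpectrum.asIdeal_lt_asIdeal _ _).mp (by rw [hclast]; exact lt_of_le_of_ne hqm hne)
    have h1 := Order.LTSeries.length_le_krullDim (c.snoc ⟨m, hm.isPrime⟩ hltP)
    have hlen : (c.snoc ⟨m, hm.isPrime⟩ hltP).length = d + 1 := by
      simp [RelSeries.snoc, RelSeries.append, hclen]
    rw [hlen] at h1
    have h2 : ((d + 1 : ℕ) : WithBot ℕ∞) ≤ ((d : ℕ) : WithBot ℕ∞) := by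
      rw [← hd]; exact_mod_cast h1
    have h3 : (d + 1 : ℕ) ≤ d := by exact_mod_cast h2
    omega
  set sfin := hfin.toFinset with hsfin
  set sB := sfin.filter (fun p => I ≤ p) with hsB
  set sM := sfin.filter (fun p => ¬ I ≤ p) with hsM
  set B := ∏ p ∈ sB, p with hB
  set M := ∏ p ∈ sM, p with hM
  have hBle : ∀ p ∈ sB, B ≤ p := fun p hp => le_trans Ideal.prod_le_inf (Finset.inf_le hp)
  have hMle : ∀ p ∈ sM, M ≤ p := fun p hp => le_trans Ideal.prod_le_inf (Finset.inf_le hp)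
  -- `B * M ≤ √A`
  have hBM : B * M ≤ A.radical := by
    rw [← Ideal.sInf_minimalPrimes]
    refine le_sInf fun p hp => ?_
    by_cases hIp : I ≤ p
    · exact le_trans Ideal.mul_le_left
        (hBle p (Finset.mem_filter.mpr ⟨hfin.mem_toFinset.mpr hp, hIp⟩))
    · exact le_trans Ideal.mul_le_right
        (hMle p (Finset.mem_filter.mpr ⟨hfin.mem_toFinset.mpr hp, hIp⟩))
  obtain ⟨n0, hn0⟩ := Ideal.exists_radical_pow_le_of_fg A (IsNoetherian.noetherian A.radical)
  set n := n0 + 1 with hn'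
  have hn : A.radical ^ n ≤ A := le_trans (Ideal.pow_le_pow_right (Nat.le_add_right _ _)) hn0
  -- `B` and `M` are comaximal
  have hBMtop : B ⊔ M = ⊤ := by
    by_contra hne
    obtain ⟨m, hm, hsub⟩ := Ideal.exists_le_maximal _ hne
    obtain ⟨q, hq, hqm⟩ := hm.isPrime.prod_le.mp (le_trans le_sup_right hsub)
    have hqmem := Finset.mem_filter.mp hq
    have hqmax : q.IsMaximal := hmax q (hfin.mem_toFinset.mp hqmem.1) hqmem.2
    have hqm' : q = m := hqmax.eq_of_le hm.ne_top hqm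
    obtain ⟨p, hp, hpm⟩ := hm.isPrime.prod_le.mp (le_trans le_sup_left hsub)
    have hpmem := Finset.mem_filter.mp hp
    exact hqmem.2 (by rw [hqm']; exact hpmem.2.trans hpm)
  have hpowtop : B ^ n ⊔ M ^ n = ⊤ := by
    have htop : ⊤ ≤ (B ^ n ⊔ M ^ n).radical := by
      rw [← hBMtop]
      refine sup_le (fun x hx => ?_) (fun x hx => ?_)
      · exact Ideal.mem_radical_of_pow_mem (Ideal.le_radical
          (Submodule.mem_sup_left (Ideal.pow_mem_pow hx n)))
      · exact Ideal.mem_radical_of_pow_mem (Ideal.le_radical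
          (Submodule.mem_sup_right (Ideal.pow_mem_pow hx n)))
    exact Ideal.radical_eq_top.mp (top_le_iff.mp htop)
  have h1mem : (1 : R) ∈ B ^ n ⊔ M ^ n := hpowtop ▸ Submodule.mem_top
  obtain ⟨e, he, m', hm', hem⟩ := Submodule.mem_sup.mp h1mem
  set J := A ⊔ Ideal.span {e} * B with hJ
  have heB : e ∈ B := by
    have hle : B ^ n ≤ B ^ 1 := Ideal.pow_le_pow_right (Nat.le_add_left 1 n0)
    simpa [pow_one] using hle he
  have hA' : e * m' ∈ A := by
    have h1 : e * m' ∈ (B * M) ^ n := by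
      rw [mul_pow]; exact Ideal.mul_mem_mul he hm'
    exact hn ((Ideal.pow_right_mono hBM n) h1)
  have heJ : e ∈ J := by
    have h1 : e * e ∈ Ideal.span {e} * B :=
      Ideal.mul_mem_mul (Ideal.mem_span_singleton_self e) heB
    have h2 : e = e * e + e * m' := by linear_combination (-e) * hem
    rw [h2]
    exact Submodule.add_mem _ (Submodule.mem_sup_right h1) (Submodule.mem_sup_left hA')
  have hJ2 : J = A ⊔ J ^ 2 := by
    refine le_antisymm (sup_le le_sup_left ?_) (sup_le le_sup_left (Ideal.pow_le_self two_ne_zero))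
    refine Ideal.mul_le.mpr fun r hr b hb => ?_
    obtain ⟨c, rfl⟩ := Ideal.mem_span_singleton'.mp hr
    have key : e * b ∈ A ⊔ J ^ 2 := by
      have h1 : e * b ∈ Ideal.span {e} * B :=
        Ideal.mul_mem_mul (Ideal.mem_span_singleton_self e) hb
      have h2 : (e * b) * e ∈ J ^ 2 := by
        rw [sq]; exact Ideal.mul_mem_mul (Submodule.mem_sup_right h1) heJ
      have h3 : (e * m') * b ∈ A := Ideal.mul_mem_right _ _ hA'
      have h4 : e * b = (e * b) * e + (e * m') * b := by linear_combination (-(e * b)) * hem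
      rw [h4]
      exact Submodule.add_mem _ (Submodule.mem_sup_right h2) (Submodule.mem_sup_left h3)
    have h5 : (c * e) * b = c * (e * b) := by ring
    rw [h5]
    exact Ideal.mul_mem_left _ c key
  -- `B ≤ √I`
  have hBrad : B ≤ I.radical := by
    rw [Ideal.radical_eq_sInf]
    refine le_sInf ?_
    rintro P ⟨hIP, hPp⟩
    haveI := hPp
    obtain ⟨p, hpmin, hpP⟩ := Ideal.exists_minimalPrimes_le (hAI.trans hIP)
    by_cases hIp : I ≤ p
    · exact (hBle p (Finset.mem_filter.mpr ⟨hfin.mem_toFinset.mpr hpmin, hIp⟩)).trans hpP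
    · exact absurd (((hmax p hpmin hIp).eq_of_le hPp.ne_top hpP) ▸ hIP) hIp
  -- `I ≤ √J`
  have hIJrad : I ≤ J.radical := by
    rw [Ideal.radical_eq_sInf]
    refine le_sInf ?_
    rintro P ⟨hJP, hPp⟩
    haveI := hPp
    obtain ⟨p, hpmin, hpP⟩ := Ideal.exists_minimalPrimes_le (le_sup_left.trans hJP)
    by_cases hIp : I ≤ p
    · exact hIp.trans hpP
    · exfalso
      haveI hpprime : p.IsPrime := hpmin.1.1
      have hPp' : P = p := ((hmax p hpmin hIp).eq_of_le hPp.ne_top hpP).symm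
      have hJp : Ideal.span {e} * B ≤ p := by
        rw [← hPp']; exact le_sup_right.trans hJP
      rcases hpprime.mul_le.mp hJp with hsp | hBp
      · have hep : e ∈ p := hsp (Ideal.mem_span_singleton_self e)
        have hm'p : m' ∈ p := by
          have hMp : M ≤ p :=
            hMle p (Finset.mem_filter.mpr ⟨hfin.mem_toFinset.mpr hpmin, hIp⟩)
          have hle : M ^ n ≤ M ^ 1 := Ideal.pow_le_pow_right (Nat.le_add_left 1 n0)
          exact hMp (by simpa [pow_one] using hle hm')
        have : (1 : R) ∈ p := by rw [← hem]; exact Submodule.add_mem _ hep hm'p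
        exact hpprime.ne_top ((Ideal.eq_top_iff_one p).mpr this)
      · obtain ⟨p', hp', hp'p⟩ := hpprime.prod_le.mp hBp
        exact hIp ((Finset.mem_filter.mp hp').2.trans hp'p)
  refine ⟨J, ?_, a, fun i => Submodule.mem_sup_left (Ideal.subset_span (Set.mem_range_self i)), hJ2⟩
  apply le_antisymm
  · have h := Ideal.radical_mono hIJrad
    rwa [Ideal.radical_idem] at h
  · have hJI : J ≤ I.radical :=
      sup_le (hAI.trans Ideal.le_radical) (Ideal.mul_le_right.trans hBrad)
    have h := Ideal.radical_mono hJI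
    rwa [Ideal.radical_idem] at h
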